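/- Let f : [a,b] → ℝ be Hölder continuous of order r ∈ (0,1] with constant H, and u : [a,b] → ℝ of bounded variation. Then for all x ∈ [a,b], |∫ₐᵇ f du − [u(x) − u(a)]·f((a+x)/2) − [u(b) − u(x)]·f((x+b)/2)| ≤ (H/2^r) · ((b−a)/2 + |x − (a+b)/2|)^r · V(u;[a,b]). -/

import Mathlib

/-- A tagged partition of the interval `[a, b]`. -/
structure TaggedPartition (a b : ℝ) where
  n : ℕ
  pts : ℕ → ℝ
  tag : ℕ → ℝ
  mono : ∀ i, pts i ≤ pts (i + 1)
  first : pts 0 = a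
  last : pts n = b
  tag_mem : ∀ i, pts i ≤ tag i ∧ tag i ≤ pts (i + 1)

/-- The Riemann–Stieltjes sum of `f` with respect to `u` over a tagged partition. -/
def RSsum (f u : ℝ → ℝ) {a b : ℝ} (P : TaggedPartition a b) : ℝ :=
  ∑ i ∈ Finset.range P.n, f (P.tag i) * (u (P.pts (i + 1)) - u (P.pts i))

/-- `IsRSIntegral f u a b I` means the Riemann–Stieltjes integral `∫ₐᵇ f du` exists
and equals `I`: Riemann–Stieltjes sums converge to `I` as the mesh tends to `0`. -/
def IsRSIntegral (f u : ℝ → ℝ) (a b I : ℝ) : Prop :=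
  ∀ ε > 0, ∃ δ > 0, ∀ P : TaggedPartition a b,
    (∀ i < P.n, P.pts (i + 1) - P.pts i < δ) → |RSsum f u P - I| < ε

/-- The total (Jordan) variation of `u` on `[a, b]`. -/
noncomputable def totalVar (u : ℝ → ℝ) (a b : ℝ) : ℝ :=
  (eVariationOn u (Set.Icc a b)).toReal

theorem two_point_subinterval_midpoints_bounded_variation
    (a b H r x I : ℝ) (f u : ℝ → ℝ)
    (hr : 0 < r) (hr1 : r ≤ 1) (hH : 0 ≤ H)
    (hf : ∀ s ∈ Set.Icc a b, ∀ t ∈ Set.Icc a b, |f s - f t| ≤ H * |s - t| ^ r)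
    (hu : BoundedVariationOn u (Set.Icc a b))
    (hx : x ∈ Set.Icc a b)
    (hI : IsRSIntegral f u a b I) :
    |I - (u x - u a) * f ((a + x) / 2) - (u b - u x) * f ((x + b) / 2)| ≤
      (H / 2 ^ r) * ((b - a) / 2 + |x - (a + b) / 2|) ^ r * totalVar u a b := by
  obtain ⟨hax, hxb⟩ := hx
  have hab : a ≤ b := le_trans hax hxb
  set M : ℝ := max ((x - a) / 2) ((b - x) / 2) with hMdef
  have hM0 : 0 ≤ M := le_max_of_le_left (by linarith)
  have hMeq : (b - a) / 2 + |x - (a + b) / 2| = 2 * M := by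
    rcases abs_cases (x - (a + b) / 2) with ⟨h1, h2⟩ | ⟨h1, h2⟩
    · rw [h1, hMdef, max_eq_left (by linarith)]; ring
    · rw [h1, hMdef, max_eq_right (by linarith)]; ring
  have hM1 : (x - a) / 2 ≤ M := le_max_left _ _
  have hM2 : (b - x) / 2 ≤ M := le_max_right _ _
  clear_value M
  have h2r : (0:ℝ) < (2:ℝ) ^ r := Real.rpow_pos_of_pos two_pos r
  have hRHS : (H / 2 ^ r) * ((b - a) / 2 + |x - (a + b) / 2|) ^ r * totalVar u a b
      = H * M ^ r * totalVar u a b := by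
    rw [hMeq, Real.mul_rpow (by norm_num) hM0]
    field_simp
  rw [hRHS]
  set V := totalVar u a b with hV
  have hV0 : 0 ≤ V := ENNReal.toReal_nonneg
  have hgoal : I - (u x - u a) * f ((a + x) / 2) - (u b - u x) * f ((x + b) / 2)
      = I - ((u x - u a) * f ((a + x) / 2) + (u b - u x) * f ((x + b) / 2)) := by ring
  rw [hgoal]
  set S : ℝ := (u x - u a) * f ((a + x) / 2) + (u b - u x) * f ((x + b) / 2) with hSdef
  have hm1 : (a + x) / 2 ∈ Set.Icc a b := ⟨by linarith, by linarith⟩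
  have hm2 : (x + b) / 2 ∈ Set.Icc a b := ⟨by linarith, by linarith⟩
  have hHM0 : 0 ≤ H * M ^ r := mul_nonneg hH (Real.rpow_nonneg hM0 r)
  refine le_of_forall_pos_le_add fun ε hε => ?_
  obtain ⟨δ, hδ, hP⟩ := hI ε hε
  obtain ⟨n₀, hn₀⟩ := exists_nat_gt ((b - a) / δ)
  set N : ℕ := n₀ + 1 with hNdef
  have hNpos : 0 < N := Nat.succ_pos _
  have hN0 : (0:ℝ) < (N:ℝ) := by exact_mod_cast hNpos
  have hNδ : (b - a) / (N:ℝ) < δ := by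
    rw [div_lt_iff₀ hN0]
    have hlt : (b - a) / δ < (N:ℝ) := lt_of_lt_of_le hn₀ (by exact_mod_cast Nat.le_succ n₀)
    calc b - a = ((b - a) / δ) * δ := by field_simp
      _ < (N:ℝ) * δ := mul_lt_mul_of_pos_right hlt hδ
      _ = δ * (N:ℝ) := mul_comm _ _
  set p : ℕ → ℝ := fun i =>
    a + ((min i N : ℕ) : ℝ) * ((x - a) / N) + ((min (i - N) N : ℕ) : ℝ) * ((b - x) / N)
    with hpdef
  have hxa' : 0 ≤ (x - a) / (N:ℝ) := div_nonneg (by linarith) hN0.le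
  have hbx' : 0 ≤ (b - x) / (N:ℝ) := div_nonneg (by linarith) hN0.le
  have hpmono : Monotone p := by
    apply monotone_nat_of_le_succ
    intro i
    have h1 : ((min i N : ℕ) : ℝ) ≤ ((min (i + 1) N : ℕ) : ℝ) := by
      exact_mod_cast min_le_min (Nat.le_succ i) le_rfl
    have h2 : ((min (i - N) N : ℕ) : ℝ) ≤ ((min (i + 1 - N) N : ℕ) : ℝ) := by
      exact_mod_cast min_le_min (by omega : i - N ≤ i + 1 - N) le_rfl
    have e1 := mul_le_mul_of_nonneg_right h1 hxa'
    have e2 := mul_le_mul_of_nonneg_right h2 hbx'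
    simp only [hpdef]
    linarith
  have hp0 : p 0 = a := by simp [hpdef]
  have hNx : ((N:ℕ):ℝ) * ((x - a) / N) = x - a := by field_simp
  have hNb : ((N:ℕ):ℝ) * ((b - x) / N) = b - x := by field_simp
  have hpN : p N = x := by
    have e1 : min N N = N := min_self N
    have e2 : min (N - N) N = 0 := by omega
    simp only [hpdef, e1, e2, Nat.cast_zero, zero_mul, add_zero, hNx]
    ring
  have hp2N : p (2 * N) = b := by
    have e1 : min (2 * N) N = N := by omega
    have e2 : min (2 * N - N) N = N := by omega
    simp only [hpdef, e1, e2, hNx, hNb]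
    ring
  have hpa : ∀ i, a ≤ p i := fun i => hp0 ▸ hpmono (Nat.zero_le i)
  have hpb : ∀ i, p i ≤ b := by
    intro i
    have h1 : ((min i N : ℕ) : ℝ) ≤ (N:ℝ) := by exact_mod_cast min_le_right i N
    have h2 : ((min (i - N) N : ℕ) : ℝ) ≤ (N:ℝ) := by exact_mod_cast min_le_right (i - N) N
    have e1 := mul_le_mul_of_nonneg_right h1 hxa'
    have e2 := mul_le_mul_of_nonneg_right h2 hbx'
    rw [hNx] at e1
    rw [hNb] at e2
    simp only [hpdef]
    linarith
  have hmesh : ∀ i, p (i + 1) - p i < δ := by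
    intro i
    have h1 : ((min (i + 1) N : ℕ) : ℝ) ≤ ((min i N : ℕ) : ℝ) + 1 := by
      exact_mod_cast (by omega : min (i + 1) N ≤ min i N + 1)
    have h2 : ((min (i + 1 - N) N : ℕ) : ℝ) ≤ ((min (i - N) N : ℕ) : ℝ) + 1 := by
      exact_mod_cast (by omega : min (i + 1 - N) N ≤ min (i - N) N + 1)
    have e1 := mul_le_mul_of_nonneg_right h1 hxa'
    have e2 := mul_le_mul_of_nonneg_right h2 hbx'
    rw [add_mul, one_mul] at e1 e2
    have hsum : (x - a) / (N:ℝ) + (b - x) / (N:ℝ) = (b - a) / (N:ℝ) := by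
      field_simp
      ring
    simp only [hpdef]
    linarith
  clear_value p
  set P : TaggedPartition a b :=
    ⟨2 * N, p, p, fun i => hpmono (Nat.le_succ i), hp0, hp2N,
      fun i => ⟨le_rfl, hpmono (Nat.le_succ i)⟩⟩ with hPdef
  have hRS : RSsum f u P = ∑ i ∈ Finset.range (2 * N), f (p i) * (u (p (i + 1)) - u (p i)) := rfl
  -- bound on |f (p i) - tag value|
  have hfb : ∀ i, i < 2 * N →
      |f (p i) - (if i < N then f ((a + x) / 2) else f ((x + b) / 2))| ≤ H * M ^ r := by
    intro i hi
    have hpI : p i ∈ Set.Icc a b := ⟨hpa i, hpb i⟩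
    by_cases h : i < N
    · rw [if_pos h]
      have h2 : p i ≤ x := hpN ▸ hpmono h.le
      have h1 : a ≤ p i := hpa i
      have habs : |p i - (a + x) / 2| ≤ M := by
        rw [abs_le]; constructor <;> linarith
      calc |f (p i) - f ((a + x) / 2)| ≤ H * |p i - (a + x) / 2| ^ r := hf _ hpI _ hm1
        _ ≤ H * M ^ r :=
            mul_le_mul_of_nonneg_left (Real.rpow_le_rpow (abs_nonneg _) habs hr.le) hH
    · rw [if_neg h]
      have h1 : x ≤ p i := hpN ▸ hpmono (not_lt.mp h)
      have h2 : p i ≤ b := hpb i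
      have habs : |p i - (x + b) / 2| ≤ M := by
        rw [abs_le]; constructor <;> linarith
      calc |f (p i) - f ((x + b) / 2)| ≤ H * |p i - (x + b) / 2| ^ r := hf _ hpI _ hm2
        _ ≤ H * M ^ r :=
            mul_le_mul_of_nonneg_left (Real.rpow_le_rpow (abs_nonneg _) habs hr.le) hH
  -- telescoping identity for S
  have hSsum : ∑ i ∈ Finset.range (2 * N),
      (if i < N then f ((a + x) / 2) else f ((x + b) / 2)) * (u (p (i + 1)) - u (p i)) = S := by
    rw [two_mul, Finset.sum_range_add]
    have hA : ∑ i ∈ Finset.range N,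
        (if i < N then f ((a + x) / 2) else f ((x + b) / 2)) * (u (p (i + 1)) - u (p i))
        = (u x - u a) * f ((a + x) / 2) := by
      rw [Finset.sum_congr rfl (fun i hi => by
        rw [if_pos (Finset.mem_range.mp hi)])]
      rw [← Finset.mul_sum ..]
      rw [Finset.sum_range_sub (fun i => u (p i))]
      rw [hpN, hp0, mul_comm]
    have hB : ∑ i ∈ Finset.range N,
        (if N + i < N then f ((a + x) / 2) else f ((x + b) / 2))
          * (u (p (N + i + 1)) - u (p (N + i)))
        = (u b - u x) * f ((x + b) / 2) := by
      have : ∀ i, u (p (N + i + 1)) - u (p (N + i))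
          = (fun j => u (p (N + j))) (i + 1) - (fun j => u (p (N + j))) i := by
        intro i; simp [Nat.add_assoc]
      rw [Finset.sum_congr rfl (fun i hi => by
        rw [if_neg (by omega), this i])]
      rw [← Finset.mul_sum ..]
      rw [Finset.sum_range_sub (fun j => u (p (N + j)))]
      have : N + N = 2 * N := by ring
      rw [Nat.add_zero, this, hp2N, hpN, mul_comm]
    rw [hA, hB, hSdef]
  -- variation bound
  have hvar : ∑ i ∈ Finset.range (2 * N), |u (p (i + 1)) - u (p i)| ≤ V := by
    have h1 := eVariationOn.sum_le (f := u) (s := Set.Icc a b) (n := 2 * N) hpmono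
      (fun i => Set.mem_Icc.mpr ⟨hpa i, hpb i⟩)
    have h2 : ∀ i ∈ Finset.range (2 * N), edist (u (p (i + 1))) (u (p i)) ≠ ⊤ :=
      fun i _ => edist_ne_top _ _
    have h3 := ENNReal.toReal_mono hu h1
    rw [ENNReal.toReal_sum h2] at h3
    have h4 : ∀ i, (edist (u (p (i + 1))) (u (p i))).toReal = |u (p (i + 1)) - u (p i)| := by
      intro i
      rw [← dist_edist, Real.dist_eq]
    rw [Finset.sum_congr rfl (fun i _ => h4 i)] at h3
    rw [hV]
    exact h3
  -- main estimate
  have hdiff : |RSsum f u P - S| ≤ H * M ^ r * V := by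
    have e : RSsum f u P - S = ∑ i ∈ Finset.range (2 * N),
        (f (p i) - (if i < N then f ((a + x) / 2) else f ((x + b) / 2)))
          * (u (p (i + 1)) - u (p i)) := by
      rw [hRS, ← hSsum, ← Finset.sum_sub_distrib]
      exact Finset.sum_congr rfl (fun i _ => by ring)
    rw [e]
    calc |∑ i ∈ Finset.range (2 * N),
        (f (p i) - (if i < N then f ((a + x) / 2) else f ((x + b) / 2)))
          * (u (p (i + 1)) - u (p i))|
        ≤ ∑ i ∈ Finset.range (2 * N),
          |(f (p i) - (if i < N then f ((a + x) / 2) else f ((x + b) / 2)))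
            * (u (p (i + 1)) - u (p i))| := Finset.abs_sum_le_sum_abs _ _
      _ ≤ ∑ i ∈ Finset.range (2 * N), H * M ^ r * |u (p (i + 1)) - u (p i)| := by
          apply Finset.sum_le_sum
          intro i hi
          rw [abs_mul]
          exact mul_le_mul_of_nonneg_right (hfb i (Finset.mem_range.mp hi)) (abs_nonneg _)
      _ = H * M ^ r * ∑ i ∈ Finset.range (2 * N), |u (p (i + 1)) - u (p i)| := by
          rw [Finset.mul_sum]
      _ ≤ H * M ^ r * V := mul_le_mul_of_nonneg_left hvar hHM0
  have hclose : |RSsum f u P - I| < ε := hP P (fun i _ => hmesh i)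
  calc |I - S| ≤ |I - RSsum f u P| + |RSsum f u P - S| := abs_sub_le _ _ _
    _ ≤ ε + H * M ^ r * V := add_le_add (by rw [abs_sub_comm]; exact hclose.le) hdiff
    _ = H * M ^ r * V + ε := by ring
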